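/- If M is a finitely generated graded indecomposable module over a graded noetherian locally finite connected ℕ-graded algebra R over a field k, then the ring of degree-0 graded endomorphisms of M is a local ring. -/

import Mathlib

/-- The ring of degree-0 graded endomorphisms of a graded module, as a subring
of `Module.End A M`. -/
def gradedEnd0 (k A : Type) [Field k] [Ring A] [Algebra k A]
    (M : Type) [AddCommGroup M] [Module A M] [Module k M] [IsScalarTower k A M]
    (ℳ : ℤ → Submodule k M) :
    Subring (Module.End A M) where
  carrier := {φ | ∀ (i : ℤ) (m : M), m ∈ ℳ i → φ m ∈ ℳ i}
  mul_mem' := by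
    intro φ ψ hφ hψ i m hm
    exact hφ i _ (hψ i m hm)
  one_mem' := by
    intro i m hm
    exact hm
  add_mem' := by
    intro φ ψ hφ hψ i m hm
    exact (ℳ i).add_mem (hφ i m hm) (hψ i m hm)
  zero_mem' := by
    intro i m hm
    exact (ℳ i).zero_mem
  neg_mem' := by
    intro φ hφ i m hm
    exact (ℳ i).neg_mem (hφ i m hm)



section Aux

variable {k A : Type} [Field k] [Ring A] [Algebra k A]
  {M : Type} [AddCommGroup M] [Module A M] [Module k M] [IsScalarTower k A M]
  (ℳ : ℤ → Submodule k M) [DirectSum.Decomposition ℳ]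

/-- A grading-preserving endomorphism commutes with taking homogeneous components. -/
lemma gr_comm (ψ : Module.End A M) (hmem : ∀ (i : ℤ) (m : M), m ∈ ℳ i → ψ m ∈ ℳ i)
    (x : M) (i : ℤ) :
    (DirectSum.decompose ℳ (ψ x) i : M) = ψ (DirectSum.decompose ℳ x i) := by
  refine DirectSum.Decomposition.inductionOn ℳ (motive := fun x => (DirectSum.decompose ℳ (ψ x) i : M) = ψ (DirectSum.decompose ℳ x i)) ?_ ?_ ?_ x
  · simp
  · intro j m
    by_cases h : i = j
    · subst h
      rw [DirectSum.decompose_of_mem_same ℳ (hmem i m m.2),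
        DirectSum.decompose_of_mem_same ℳ m.2]
    · rw [DirectSum.decompose_of_mem_ne ℳ (hmem j m m.2) (Ne.symm h),
        DirectSum.decompose_of_mem_ne ℳ m.2 (Ne.symm h), map_zero]
  · intro m m' hm hm'
    rw [map_add, DirectSum.decompose_add, DirectSum.decompose_add, DirectSum.add_apply,
      DirectSum.add_apply, Submodule.coe_add, Submodule.coe_add, hm, hm', map_add]

/-- If every homogeneous component of `z` vanishes then `z = 0`. -/
lemma gr_zero (z : M) (h : ∀ i, (DirectSum.decompose ℳ z i : M) = 0) : z = 0 := by
  classical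
  rw [← DirectSum.sum_support_decompose ℳ z]
  exact Finset.sum_eq_zero fun i _ => h i

/-- A grading-preserving bijection with homogeneous preimages of homogeneous elements
is a unit of the degree-0 graded endomorphism ring. -/
lemma gr_unit (ψ : Module.End A M) (hmem : ψ ∈ gradedEnd0 k A M ℳ)
    (hinj : Function.Injective ψ)
    (hsurj : ∀ (i : ℤ) (x : M), x ∈ ℳ i → ∃ y ∈ ℳ i, ψ y = x) :
    IsUnit (⟨ψ, hmem⟩ : gradedEnd0 k A M ℳ) := by
  have hsurj' : Function.Surjective ψ := by
    intro x
    refine DirectSum.Decomposition.inductionOn ℳ (motive := fun x => ∃ y, ψ y = x) ⟨0, map_zero ψ⟩ ?_ ?_ x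
    · intro i m
      obtain ⟨y, _, hy⟩ := hsurj i m m.2
      exact ⟨y, hy⟩
    · rintro m m' ⟨y, hy⟩ ⟨y', hy'⟩
      exact ⟨y + y', by rw [map_add, hy, hy']⟩
  let eqv := LinearEquiv.ofBijective ψ ⟨hinj, hsurj'⟩
  have hg : (eqv.symm.toLinearMap : Module.End A M) ∈ gradedEnd0 k A M ℳ := by
    intro i m hm
    obtain ⟨y, hy, hyx⟩ := hsurj i m hm
    have : eqv.symm m = y := by
      apply hinj
      have : ψ (eqv.symm m) = eqv (eqv.symm m) := rfl
      rw [this, eqv.apply_symm_apply, hyx]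
    rw [show (eqv.symm.toLinearMap : Module.End A M) m = eqv.symm m from rfl, this]
    exact hy
  refine isUnit_iff_exists.mpr ⟨⟨eqv.symm.toLinearMap, hg⟩, ?_, ?_⟩
  · ext m
    exact eqv.apply_symm_apply m
  · ext m
    exact eqv.symm_apply_apply m

end Aux

/-- if `M` is a finitely generated graded indecomposable module
over a graded noetherian, locally finite, connected ℕ-graded `k`-algebra, then
the degree-0 graded endomorphism ring of `M` is a local ring. -/
theorem stmt_1 (k A : Type) [Field k] [Ring A] [Algebra k A]
    (𝒜 : ℕ → Submodule k A) [GradedAlgebra 𝒜]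
    (hconn : ∀ a ∈ 𝒜 0, ∃ c : k, a = algebraMap k A c)
    (hlf : ∀ i, FiniteDimensional k (𝒜 i))
    [IsNoetherianRing A]
    (M : Type) [AddCommGroup M] [Module A M] [Module k M] [IsScalarTower k A M]
    [Module.Finite A M]
    (ℳ : ℤ → Submodule k M) [DirectSum.Decomposition ℳ]
    (hMsmul : ∀ (i : ℕ) (j : ℤ) (a : A) (m : M),
      a ∈ 𝒜 i → m ∈ ℳ j → a • m ∈ ℳ ((i : ℤ) + j))
    (hMbdd : ∃ n₀ : ℤ, ∀ n < n₀, ℳ n = ⊥)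
    (hMlf : ∀ i, FiniteDimensional k (ℳ i))
    -- `M` is indecomposable (in the category of f.g. graded modules)
    (hM0 : Nontrivial M)
    (hind : ∀ P Q : Submodule A M,
      (∀ (i : ℤ) (x : M), x ∈ P → (DirectSum.decompose ℳ x i : M) ∈ P) →
      (∀ (i : ℤ) (x : M), x ∈ Q → (DirectSum.decompose ℳ x i : M) ∈ Q) →
      IsCompl P Q → P = ⊥ ∨ Q = ⊥) :
    IsLocalRing (gradedEnd0 k A M ℳ) := by
  classical
  obtain ⟨m₀, m₁, hm01⟩ := hM0
  haveI : Nontrivial (gradedEnd0 k A M ℳ) := by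
    refine nontrivial_of_ne 1 0 fun h => hm01 ?_
    have h0 : ((1 : gradedEnd0 k A M ℳ) : Module.End A M) (m₀ - m₁) =
        ((0 : gradedEnd0 k A M ℳ) : Module.End A M) (m₀ - m₁) := by rw [h]
    simpa [sub_eq_zero] using h0
  have main : ∀ x : gradedEnd0 k A M ℳ, IsUnit x ∨ IsUnit (1 - x) := by
    rintro ⟨φ, hφ⟩
    -- powers of φ preserve the grading
    have hφn : ∀ n : ℕ, (φ ^ n) ∈ gradedEnd0 k A M ℳ := fun n => pow_mem hφ n
    -- the restriction of φ to each graded piece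
    have hres : ∀ (i : ℤ), ∀ x ∈ ℳ i, (LinearMap.restrictScalars k φ) x ∈ ℳ i :=
      fun i x hx => hφ i x hx
    set e : ∀ i : ℤ, Module.End k (ℳ i) :=
      fun i => (LinearMap.restrictScalars k φ).restrict (hres i) with he
    have epow : ∀ (i : ℤ) (n : ℕ) (x : ℳ i), (((e i) ^ n) x : M) = (φ ^ n) (x : M) := by
      intro i n
      induction n with
      | zero => intro x; simp
      | succ n ih =>
        intro x
        rw [pow_succ, pow_succ, Module.End.mul_apply, Module.End.mul_apply, ih]
        rfl
    -- Fitting's lemma on each graded piece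
    have fitting : ∀ i : ℤ, ∃ N : ℕ,
        IsCompl (LinearMap.ker ((e i) ^ N)) (LinearMap.range ((e i) ^ N)) ∧
        (⨅ m, LinearMap.range ((e i) ^ m)) = LinearMap.range ((e i) ^ N) ∧
        (⨆ m, LinearMap.ker ((e i) ^ m)) = LinearMap.ker ((e i) ^ N) := by
      intro i
      haveI := hMlf i
      exact ((e i).eventually_isCompl_ker_pow_range_pow.and
        (((e i).eventually_iInf_range_pow_eq).and
          ((e i).eventually_iSup_ker_pow_eq))).exists.imp
        (fun N h => ⟨h.1, h.2.1, h.2.2⟩)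
    choose N hN1 hN2 hN3 using fitting
    -- the Fitting submodules of M
    set P : Submodule A M := ⨆ n : ℕ, LinearMap.ker (φ ^ n) with hP
    set Q : Submodule A M := ⨅ n : ℕ, LinearMap.range (φ ^ n) with hQdef
    have hker_mono : Monotone fun n : ℕ => LinearMap.ker (φ ^ n) := by
      intro n m h x hx
      simp only [LinearMap.mem_ker] at hx ⊢
      rw [← Nat.sub_add_cancel h, pow_add, Module.End.mul_apply, hx, map_zero]
    have hPmem : ∀ x : M, x ∈ P ↔ ∃ n : ℕ, (φ ^ n) x = 0 := by
      intro x
      rw [hP, Submodule.mem_iSup_of_directed _ hker_mono.directed_le]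
      simp [LinearMap.mem_ker]
    have hQmem : ∀ x : M, x ∈ Q ↔ ∀ n : ℕ, ∃ y, (φ ^ n) y = x := by
      intro x
      rw [hQdef, Submodule.mem_iInf]
      simp [LinearMap.mem_range]
    -- P and Q are graded submodules
    have hPg : ∀ (i : ℤ) (x : M), x ∈ P → (DirectSum.decompose ℳ x i : M) ∈ P := by
      intro i x hx
      obtain ⟨n, hn⟩ := (hPmem x).mp hx
      refine (hPmem _).mpr ⟨n, ?_⟩
      rw [← gr_comm ℳ (φ ^ n) (hφn n) x i, hn]
      simp
    have hQg : ∀ (i : ℤ) (x : M), x ∈ Q → (DirectSum.decompose ℳ x i : M) ∈ Q := by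
      intro i x hx
      refine (hQmem _).mpr fun n => ?_
      obtain ⟨y, hy⟩ := (hQmem x).mp hx n
      exact ⟨DirectSum.decompose ℳ y i, by rw [← gr_comm ℳ (φ ^ n) (hφn n) y i, hy]⟩
    -- membership in P/Q for homogeneous elements is detected by the restricted maps
    have hL1 : ∀ (i : ℤ) (x : ℳ i), (x : M) ∈ Q ↔ x ∈ LinearMap.range ((e i) ^ (N i)) := by
      intro i x
      rw [← hN2 i]
      rw [show (x ∈ ⨅ m, LinearMap.range ((e i) ^ m)) ↔ ∀ m, x ∈ LinearMap.range ((e i) ^ m)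
        from Submodule.mem_iInf _]
      constructor
      · intro hx n
        obtain ⟨y, hy⟩ := (hQmem _).mp hx n
        refine ⟨⟨DirectSum.decompose ℳ y i, Submodule.coe_mem _⟩, ?_⟩
        have : (x : M) = (φ ^ n) (DirectSum.decompose ℳ y i : M) := by
          rw [← gr_comm ℳ (φ ^ n) (hφn n) y i, hy, DirectSum.decompose_of_mem_same ℳ x.2]
        exact Subtype.ext (by rw [epow]; exact this.symm)
      · intro hx
        refine (hQmem _).mpr fun n => ?_
        obtain ⟨y, hy⟩ := hx n
        refine ⟨(y : M), ?_⟩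
        rw [← epow, hy]
    have hL2 : ∀ (i : ℤ) (x : ℳ i), (x : M) ∈ P ↔ x ∈ LinearMap.ker ((e i) ^ (N i)) := by
      intro i x
      rw [← hN3 i, Submodule.mem_iSup_of_directed _
        (by intro n m h y hy;
            simp only [LinearMap.mem_ker] at hy ⊢;
            rw [← Nat.sub_add_cancel h, pow_add, Module.End.mul_apply, hy, map_zero] :
          Monotone fun n : ℕ => LinearMap.ker ((e i) ^ n)).directed_le]
      constructor
      · intro hx
        obtain ⟨n, hn⟩ := (hPmem _).mp hx
        exact ⟨n, LinearMap.mem_ker.mpr (Subtype.ext (by rw [epow]; exact hn))⟩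
      · rintro ⟨n, hn⟩
        refine (hPmem _).mpr ⟨n, ?_⟩
        rw [← epow, LinearMap.mem_ker.mp hn, ZeroMemClass.coe_zero]
    -- P and Q are complementary
    have hdis : Disjoint P Q := by
      rw [Submodule.disjoint_def]
      intro x hxP hxQ
      refine gr_zero ℳ x fun i => ?_
      have h1 := (hL2 i (DirectSum.decompose ℳ x i)).mp (hPg i x hxP)
      have h2 := (hL1 i (DirectSum.decompose ℳ x i)).mp (hQg i x hxQ)
      have h3 := (hN1 i).disjoint.le_bot ⟨h1, h2⟩
      rw [Submodule.mem_bot] at h3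
      rw [h3, ZeroMemClass.coe_zero]
    have hcodis : Codisjoint P Q := by
      rw [codisjoint_iff, eq_top_iff]
      intro x _
      refine DirectSum.Decomposition.inductionOn ℳ (motive := fun x => x ∈ P ⊔ Q)
        (Submodule.zero_mem _) ?_ (fun m m' hm hm' => Submodule.add_mem _ hm hm') x
      intro i m
      have : (m : ℳ i) ∈ (⊤ : Submodule k (ℳ i)) := Submodule.mem_top
      rw [← codisjoint_iff.mp (hN1 i).codisjoint] at this
      obtain ⟨p, hp, q, hq, hpq⟩ := Submodule.mem_sup.mp this
      have hmeq : (m : M) = (p : M) + (q : M) := by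
        rw [← Submodule.coe_add, hpq]
      rw [hmeq]
      exact Submodule.add_mem_sup ((hL2 i p).mpr hp) ((hL1 i q).mpr hq)
    rcases hind P Q hPg hQg ⟨hdis, hcodis⟩ with hPbot | hQbot
    · -- P = ⊥ : φ is injective, hence a unit
      left
      have hinj : Function.Injective φ := by
        rw [← LinearMap.ker_eq_bot, eq_bot_iff, ← hPbot]
        refine le_trans ?_ (le_iSup (fun n : ℕ => LinearMap.ker (φ ^ n)) 1)
        rw [pow_one]
      refine gr_unit ℳ φ hφ hinj ?_
      intro i x hx
      haveI := hMlf i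
      have einj : Function.Injective (e i) := by
        intro y z h
        have : φ (y : M) = φ (z : M) := by
          have hy : ((e i) y : M) = φ (y : M) := rfl
          have hz : ((e i) z : M) = φ (z : M) := rfl
          rw [← hy, ← hz, h]
        exact Subtype.ext (hinj this)
      obtain ⟨y, hy⟩ := (LinearMap.injective_iff_surjective.mp einj) ⟨x, hx⟩
      refine ⟨(y : M), Submodule.coe_mem y, ?_⟩
      have : ((e i) y : M) = φ (y : M) := rfl
      rw [← this, hy]
    · -- Q = ⊥ : φ is locally nilpotent, hence 1 - φ is a unit
      right
      have hnil : ∀ (i : ℤ) (x : M), x ∈ ℳ i → (φ ^ (N i)) x = 0 := by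
        intro i x hx
        have hr : ((e i) ^ (N i)) ⟨x, hx⟩ ∈ LinearMap.range ((e i) ^ (N i)) :=
          LinearMap.mem_range_self _ _
        have : ((((e i) ^ (N i)) ⟨x, hx⟩ : ℳ i) : M) ∈ Q := (hL1 i _).mpr hr
        rw [hQbot, Submodule.mem_bot] at this
        have hx2 : (φ ^ (N i)) x = ((((e i) ^ (N i)) ⟨x, hx⟩ : ℳ i) : M) :=
          (epow i (N i) ⟨x, hx⟩).symm
        rw [hx2, this]
      set ψ : Module.End A M := 1 - φ with hψ
      have hψmem : ψ ∈ gradedEnd0 k A M ℳ := by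
        intro i m hm
        exact Submodule.sub_mem _ hm (hφ i m hm)
      have key : (1 - (⟨φ, hφ⟩ : gradedEnd0 k A M ℳ)) = ⟨ψ, hψmem⟩ := rfl
      rw [key]
      have hfix : ∀ (i : ℤ) (z : M), z ∈ ℳ i → φ z = z → z = 0 := by
        intro i z hz hfz
        have hpow : ∀ n : ℕ, (φ ^ n) z = z := by
          intro n
          induction n with
          | zero => simp
          | succ n ih => rw [pow_succ, Module.End.mul_apply, hfz, ih]
        rw [← hpow (N i), hnil i z hz]
      have hinj : Function.Injective ψ := by
        rw [← LinearMap.ker_eq_bot, eq_bot_iff]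
        intro z hz
        rw [LinearMap.mem_ker] at hz
        rw [Submodule.mem_bot]
        have hz' : φ z = z := by
          have h0 : z - φ z = 0 := by
            rw [hψ] at hz
            simpa [LinearMap.sub_apply] using hz
          rw [← sub_eq_zero, ← neg_sub, neg_eq_zero]
          exact h0
        refine gr_zero ℳ z fun i => ?_
        refine hfix i _ (Submodule.coe_mem _) ?_
        rw [← gr_comm ℳ φ hφ z i, hz']
      refine gr_unit ℳ ψ hψmem hinj ?_
      intro i x hx
      refine ⟨∑ j ∈ Finset.range (N i), (φ ^ j) x, ?_, ?_⟩
      · exact Submodule.sum_mem _ fun j _ => hφn j i x hx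
      · rw [hψ, LinearMap.sub_apply, Module.End.one_apply, map_sum, ← Finset.sum_sub_distrib]
        have : ∀ j ∈ Finset.range (N i), (φ ^ j) x - φ ((φ ^ j) x)
            = (φ ^ j) x - (φ ^ (j + 1)) x := by
          intro j _
          rw [pow_succ', Module.End.mul_apply]
        rw [Finset.sum_congr rfl this, Finset.sum_range_sub' (fun j => (φ ^ j) x) (N i),
          pow_zero, Module.End.one_apply, hnil i x hx, sub_zero]


  exact ⟨fun {a b} hab => by rw [eq_sub_of_add_eq' hab]; exact main a⟩
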